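/- For every real κ ≥ 1 and every real r with 1/κ ≤ r ≤ 1, ∫_{1/κ}^{1} x^{−3/2} · ln|1 − x/r| dx ≥ −2·ln(8/r). -/

import Mathlib

open Matrix Polynomial Set

/-- Euclidean norm of a vector in `ℝⁿ`. -/
noncomputable def vecNorm {n : ℕ} (v : Fin n → ℝ) : ℝ :=
  Real.sqrt (∑ i, v i ^ 2)

/-- Spectral (operator) norm of a real matrix. -/
noncomputable def matNorm {m n : ℕ} (A : Matrix (Fin m) (Fin n) ℝ) : ℝ :=
  sSup {c : ℝ | ∃ v : Fin n → ℝ, vecNorm v ≤ 1 ∧ c = vecNorm (A.mulVec v)}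

/-- Largest eigenvalue of a square real matrix. -/
noncomputable def lmax {n : ℕ} (A : Matrix (Fin n) (Fin n) ℝ) : ℝ :=
  sSup {μ : ℝ | ∃ v : Fin n → ℝ, v ≠ 0 ∧ A.mulVec v = μ • v}

/-- Smallest eigenvalue of a square real matrix. -/
noncomputable def lmin {n : ℕ} (A : Matrix (Fin n) (Fin n) ℝ) : ℝ :=
  sInf {μ : ℝ | ∃ v : Fin n → ℝ, v ≠ 0 ∧ A.mulVec v = μ • v}

/-- A matrix is tridiagonal if `T i j = 0` whenever `|i - j| > 1`. -/
def IsTridiagonal {k : ℕ} (T : Matrix (Fin k) (Fin k) ℝ) : Prop :=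
  ∀ i j : Fin k, 1 < |(i : ℤ) - (j : ℤ)| → T i j = 0

/-- The matrix function `f(A)` of a real symmetric matrix, defined through the
eigendecomposition `A = V Λ Vᵀ` as `V f(Λ) Vᵀ`. -/
noncomputable def matFun {n : ℕ} {A : Matrix (Fin n) (Fin n) ℝ} (hA : A.IsHermitian)
    (f : ℝ → ℝ) : Matrix (Fin n) (Fin n) ℝ :=
  (hA.eigenvectorUnitary : Matrix (Fin n) (Fin n) ℝ) * Matrix.diagonal (f ∘ hA.eigenvalues) *
    star (hA.eigenvectorUnitary : Matrix (Fin n) (Fin n) ℝ)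

/-- The `i`-th Chebyshev polynomial of the first kind, shifted and stretched to the range
`[lmin A - η, lmax A + η]`: with `r_max = lmax A + η`, `r_min = lmin A - η` and
`δ = 2 / (r_max - r_min)`, this is `y ↦ T_i (δ (y - r_min) - 1)`. -/
noncomputable def shiftedCheb {n : ℕ} (A : Matrix (Fin n) (Fin n) ℝ) (η : ℝ) (i : ℕ) :
    Polynomial ℝ :=
  (Polynomial.Chebyshev.T ℝ i).comp
    (Polynomial.C (2 / ((lmax A + η) - (lmin A - η))) *
      (Polynomial.X - Polynomial.C (lmin A - η)) - 1)

section helpers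

lemma aux_sub_one_le_mul_log {v : ℝ} (hv : 0 < v) : v - 1 ≤ v * Real.log v := by
  have h := Real.log_le_sub_one_of_pos (show (0:ℝ) < v⁻¹ by positivity)
  rw [Real.log_inv] at h
  have : 1 - v⁻¹ ≤ Real.log v := by linarith
  nlinarith [mul_le_mul_of_nonneg_left this hv.le, mul_inv_cancel₀ hv.ne']

lemma aux_le_mul_log {q : ℝ} (hq : 0 ≤ q) : q ≤ (1 + q) * Real.log (1 + q) := by
  have h1 : (0:ℝ) < 1 + q := by linarith
  have := aux_sub_one_le_mul_log h1
  linarith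

lemma aux_P2 {s t : ℝ} (ht : 0 < t) (hts : t ≤ s) :
    2 * s * Real.log s ≤ (s - t) * Real.log (s - t) + (s + t) * Real.log (s + t) := by
  have hs : 0 < s := lt_of_lt_of_le ht hts
  rcases eq_or_lt_of_le hts with h | h
  · subst h
    simp only [sub_self, zero_mul, Real.log_zero, mul_zero, zero_add]
    have : Real.log (t + t) = Real.log 2 + Real.log t := by
      rw [← Real.log_mul (by norm_num) ht.ne']; ring_nf
    rw [this]
    nlinarith [Real.log_pos (by norm_num : (1:ℝ) < 2), ht]
  · set q : ℝ := t / s with hq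
    have hq0 : 0 < q := by positivity
    have hq1 : q < 1 := (div_lt_one hs).mpr h
    have hst : s - t = s * (1 - q) := by rw [hq]; field_simp
    have hst' : s + t = s * (1 + q) := by rw [hq]; field_simp
    have l1 : Real.log (s - t) = Real.log s + Real.log (1 - q) := by
      rw [hst, Real.log_mul hs.ne' (by linarith)]
    have l2 : Real.log (s + t) = Real.log s + Real.log (1 + q) := by
      rw [hst', Real.log_mul hs.ne' (by linarith)]
    have b1 : -q ≤ (1 - q) * Real.log (1 - q) := by
      have := aux_sub_one_le_mul_log (show (0:ℝ) < 1 - q by linarith)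
      linarith
    have b2 : q ≤ (1 + q) * Real.log (1 + q) := aux_le_mul_log hq0.le
    have e1 : (s - t) * Real.log (s - t)
        = (s - t) * Real.log s + s * ((1 - q) * Real.log (1 - q)) := by
      rw [l1, hst]; ring
    have e2 : (s + t) * Real.log (s + t)
        = (s + t) * Real.log s + s * ((1 + q) * Real.log (1 + q)) := by
      rw [l2, hst']; ring
    have hqs : q * s = t := by rw [hq]; field_simp
    nlinarith [mul_le_mul_of_nonneg_left b1 hs.le, mul_le_mul_of_nonneg_left b2 hs.le]

lemma aux_chi {s : ℝ} (hs : 0 < s) (hs1 : s ≤ 1) :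
    0 ≤ 2 * s + (1 - s) * Real.log (1 - s) - (1 + s) * Real.log (1 + s) := by
  rcases eq_or_lt_of_le hs1 with h | h
  · subst h
    simp only [sub_self, zero_mul, Real.log_zero, mul_zero]
    have h2 : Real.log 2 < 0.6931471808 := Real.log_two_lt_d9
    norm_num
    nlinarith [h2]
  · set χ : ℝ → ℝ := fun y => 2 * y + (1 - y) * Real.log (1 - y) - (1 + y) * Real.log (1 + y)
      with hχ
    have key : ∀ y ∈ Set.Ioo (0:ℝ) s, HasDerivAt χ
        (-(Real.log ((1 - y) * (1 + y)))) y := by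
      intro y hy
      obtain ⟨hy0, hys⟩ := hy
      have h1y : (0:ℝ) < 1 - y := by linarith
      have h1y' : (0:ℝ) < 1 + y := by linarith
      have d1 : HasDerivAt (fun y : ℝ => (1 - y) * Real.log (1 - y))
          ((Real.log (1 - y) + 1) * (-1)) y := by
        have := (Real.hasDerivAt_mul_log h1y.ne').comp y
          (((hasDerivAt_id y).const_sub 1 : HasDerivAt (fun y : ℝ => 1 - y) (-1) y))
        exact this.congr_deriv (by ring)
      have d2 : HasDerivAt (fun y : ℝ => (1 + y) * Real.log (1 + y))
          ((Real.log (1 + y) + 1) * 1) y := by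
        have := (Real.hasDerivAt_mul_log h1y'.ne').comp y
          (((hasDerivAt_id y).const_add 1 : HasDerivAt (fun y : ℝ => 1 + y) 1 y))
        exact this.congr_deriv (by ring)
      have := ((hasDerivAt_id y).const_mul 2 |>.add d1).sub d2
      refine this.congr_deriv ?_
      rw [Real.log_mul h1y.ne' h1y'.ne']
      ring
    have mono : MonotoneOn χ (Set.Icc 0 s) := by
      apply monotoneOn_of_deriv_nonneg (convex_Icc 0 s)
      · apply Continuous.continuousOn
        have h1 : Continuous fun y : ℝ => (1 - y) * Real.log (1 - y) :=
          Real.continuous_mul_log.comp (continuous_const.sub continuous_id)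
        have h2 : Continuous fun y : ℝ => (1 + y) * Real.log (1 + y) :=
          Real.continuous_mul_log.comp (continuous_const.add continuous_id)
        fun_prop
      · intro y hy
        rw [interior_Icc] at hy
        exact ((key y hy).differentiableAt).differentiableWithinAt
      · intro y hy
        rw [interior_Icc] at hy
        rw [(key y hy).deriv]
        have h1y : (0:ℝ) < 1 - y := by linarith [hy.2]
        have h1y' : (0:ℝ) < 1 + y := by linarith [hy.1]
        have hle : (1 - y) * (1 + y) ≤ 1 := by nlinarith [hy.1]
        have := Real.log_nonpos (by positivity) hle
        linarith
    have h0 : χ 0 = 0 := by simp [hχ]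
    have := mono (Set.left_mem_Icc.mpr hs.le) (Set.mem_Icc.mpr ⟨hs.le, le_refl s⟩) hs.le
    rw [h0] at this
    simpa [hχ] using this

noncomputable def phiAux (s u : ℝ) : ℝ :=
  2 / s * u⁻¹ * ((u - s) * Real.log (u - s) - (u + s) * Real.log (u + s))
    + 4 * Real.log s * u⁻¹

lemma phiAux_continuousOn (s : ℝ) :
    ContinuousOn (phiAux s) {u : ℝ | u ≠ 0} := by
  have h1 : Continuous fun u : ℝ => (u - s) * Real.log (u - s) :=
    Real.continuous_mul_log.comp (continuous_id.sub continuous_const)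
  have h2 : Continuous fun u : ℝ => (u + s) * Real.log (u + s) :=
    Real.continuous_mul_log.comp (continuous_id.add continuous_const)
  have hinv : ContinuousOn (fun u : ℝ => u⁻¹) {u : ℝ | u ≠ 0} :=
    continuousOn_inv₀
  unfold phiAux
  exact (((continuousOn_const.mul hinv).mul
    (h1.sub h2).continuousOn).add (continuousOn_const.mul hinv))

lemma phiAux_hasDerivAt {s u : ℝ} (hs : 0 < s) (hu : 0 < u) (hne : u ≠ s) :
    HasDerivAt (phiAux s)
      (2 / u ^ 2 * (Real.log (u - s) + Real.log (u + s) - 2 * Real.log s)) u := by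
  have hus : u - s ≠ 0 := sub_ne_zero.mpr hne
  have hus' : u + s ≠ 0 := by positivity
  have dA : HasDerivAt (fun u : ℝ => (u - s) * Real.log (u - s))
      ((Real.log (u - s) + 1) * 1) u := by
    have := (Real.hasDerivAt_mul_log hus).comp u ((hasDerivAt_id u).sub_const s)
    exact this.congr_deriv (by ring)
  have dB : HasDerivAt (fun u : ℝ => (u + s) * Real.log (u + s))
      ((Real.log (u + s) + 1) * 1) u := by
    have := (Real.hasDerivAt_mul_log hus').comp u ((hasDerivAt_id u).add_const s)
    exact this.congr_deriv (by ring)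
  have dC : HasDerivAt (fun u : ℝ => u⁻¹) (-(u ^ 2)⁻¹) u := hasDerivAt_inv hu.ne'
  have d1 : HasDerivAt (fun u : ℝ => 2 / s * u⁻¹ *
      ((u - s) * Real.log (u - s) - (u + s) * Real.log (u + s)))
      ((2 / s * -(u ^ 2)⁻¹) * ((u - s) * Real.log (u - s) - (u + s) * Real.log (u + s))
        + 2 / s * u⁻¹ * ((Real.log (u - s) + 1) * 1 - (Real.log (u + s) + 1) * 1)) u := by
    exact (dC.const_mul (2 / s)).mul (dA.sub dB)
  have d2 : HasDerivAt (fun u : ℝ => 4 * Real.log s * u⁻¹)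
      (4 * Real.log s * -(u ^ 2)⁻¹) u := dC.const_mul (4 * Real.log s)
  have := d1.add d2
  refine this.congr_deriv ?_
  field_simp
  ring

lemma intervalIntegrable_log_zero (c : ℝ) (hc : 0 ≤ c) :
    IntervalIntegrable Real.log MeasureTheory.volume 0 c := by
  have hg : IntervalIntegrable (fun x : ℝ => 2 * x ^ (-(1:ℝ)/2) + |Real.log c|)
      MeasureTheory.volume 0 c := by
    apply IntervalIntegrable.add
    · exact (intervalIntegral.intervalIntegrable_rpow' (by norm_num)).const_mul 2
    · exact intervalIntegrable_const
  apply hg.mono_fun'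
  · exact Real.measurable_log.aestronglyMeasurable
  · rw [Filter.EventuallyLE, MeasureTheory.ae_restrict_iff' measurableSet_uIoc]
    apply Filter.Eventually.of_forall
    intro x hx
    rw [Set.uIoc_of_le hc] at hx
    obtain ⟨hx0, hxc⟩ := hx
    have hpow : (0:ℝ) ≤ x ^ (-(1:ℝ)/2) := Real.rpow_nonneg hx0.le _
    simp only [Real.norm_eq_abs]
    rcases le_or_gt x 1 with h1 | h1
    · have hlx : Real.log x ≤ 0 := Real.log_nonpos hx0.le h1
      have key : -Real.log x ≤ 2 * x ^ (-(1:ℝ)/2) := by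
        have hsx : 0 < Real.sqrt x := Real.sqrt_pos.mpr hx0
        have h2 : Real.log (Real.sqrt x)⁻¹ ≤ (Real.sqrt x)⁻¹ - 1 :=
          Real.log_le_sub_one_of_pos (by positivity)
        have h3 : Real.log x = 2 * Real.log (Real.sqrt x) := by
          rw [Real.log_sqrt hx0.le]; ring
        have h4 : x ^ (-(1:ℝ)/2) = (Real.sqrt x)⁻¹ := by
          rw [show (-(1:ℝ)/2) = -(1/2 : ℝ) by norm_num, Real.rpow_neg hx0.le,
            ← Real.sqrt_eq_rpow]
        rw [Real.log_inv] at h2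
        rw [h3, h4]
        linarith
      rw [abs_of_nonpos hlx]
      have : (0:ℝ) ≤ |Real.log c| := abs_nonneg _
      linarith
    · have hlx : 0 ≤ Real.log x := Real.log_nonneg h1.le
      have hcc : Real.log x ≤ Real.log c := Real.log_le_log hx0 hxc
      have h5 : Real.log c ≤ |Real.log c| := le_abs_self _
      rw [abs_of_nonneg hlx]
      linarith

lemma intervalIntegrable_log'' (a b : ℝ) :
    IntervalIntegrable Real.log MeasureTheory.volume a b := by
  have key : ∀ c : ℝ, IntervalIntegrable Real.log MeasureTheory.volume 0 c := by
    intro c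
    rcases le_or_gt 0 c with h | h
    · exact intervalIntegrable_log_zero c h
    · exact (IntervalIntegrable.iff_comp_neg).mpr
        (by simpa [Real.log_neg_eq_log] using intervalIntegrable_log_zero (-c) (by linarith))
  exact ((key a).symm.trans (key b))

lemma intervalIntegrable_log_affine (p q a b : ℝ) :
    IntervalIntegrable (fun x => Real.log (p - x * q)) MeasureTheory.volume a b := by
  rcases eq_or_ne q 0 with h | h
  · simp only [h, mul_zero, sub_zero]
    exact intervalIntegrable_const
  · have h1 : IntervalIntegrable (fun x => Real.log (p - x)) MeasureTheory.volume
        (p - (p - a * q)) (p - (p - b * q)) :=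
      (intervalIntegrable_log'' (p - a * q) (p - b * q)).comp_sub_left p
    rw [show p - (p - a * q) = a * q by ring, show p - (p - b * q) = b * q by ring] at h1
    have h2 := h1.comp_mul_right (c := q)
    have ea : a * q / q = a := by field_simp
    have eb : b * q / q = b := by field_simp
    rw [ea, eb] at h2
    exact h2

end helpers

theorem weighted_log_integral_single_root
    (κ r : ℝ) (hκ : 1 ≤ κ) (hr1 : 1 / κ ≤ r) (hr2 : r ≤ 1) :
    -2 * Real.log (8 / r) ≤
      ∫ x in (1 / κ)..1, x ^ (-(3 : ℝ) / 2) * Real.log |1 - x / r| := by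
  have hκ0 : (0:ℝ) < κ := lt_of_lt_of_le one_pos hκ
  have ha : (0:ℝ) < 1 / κ := by positivity
  have hr0 : (0:ℝ) < r := lt_of_lt_of_le ha hr1
  have hab : (1:ℝ) / κ ≤ 1 := by
    rw [div_le_one hκ0]; exact hκ
  set s : ℝ := Real.sqrt r with hsdef
  set t : ℝ := Real.sqrt (1 / κ) with htdef
  have hs : 0 < s := Real.sqrt_pos.mpr hr0
  have ht : 0 < t := Real.sqrt_pos.mpr ha
  have hts : t ≤ s := Real.sqrt_le_sqrt hr1
  have hs1 : s ≤ 1 := by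
    rw [hsdef, show (1:ℝ) = Real.sqrt 1 by simp]
    exact Real.sqrt_le_sqrt hr2
  have hsr : s ^ 2 = r := Real.sq_sqrt hr0.le
  set F : ℝ → ℝ := fun x => phiAux s (Real.sqrt x) with hF
  set f : ℝ → ℝ := fun x => x ^ (-(3 : ℝ) / 2) * Real.log |1 - x / r| with hf
  -- integrability
  have hint : IntervalIntegrable f MeasureTheory.volume (1 / κ) 1 := by
    have hlog : IntervalIntegrable (fun x => Real.log (1 - x * r⁻¹))
        MeasureTheory.volume (1 / κ) 1 := intervalIntegrable_log_affine 1 r⁻¹ (1 / κ) 1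
    have hc : ContinuousOn (fun x : ℝ => x ^ (-(3 : ℝ) / 2)) (Set.uIcc (1 / κ) 1) := by
      apply ContinuousOn.rpow_const continuousOn_id
      intro x hx
      left
      rw [Set.uIcc_of_le hab] at hx
      exact ne_of_gt (lt_of_lt_of_le ha hx.1)
    have h2 := hlog.continuousOn_mul hc
    have : f = fun x => x ^ (-(3 : ℝ) / 2) * Real.log (1 - x * r⁻¹) := by
      funext x
      rw [hf]
      simp only
      rw [Real.log_abs, show x / r = x * r⁻¹ from div_eq_mul_inv x r]
    rw [this]
    exact h2
  -- derivative
  have hD : ∀ x : ℝ, 0 < x → x ≠ r → HasDerivAt F (f x) x := by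
    intro x hx hxr
    have hu : 0 < Real.sqrt x := Real.sqrt_pos.mpr hx
    have hux : Real.sqrt x ^ 2 = x := Real.sq_sqrt hx.le
    have hune : Real.sqrt x ≠ s := by
      intro h
      exact hxr (by rw [← hux, h, hsr])
    have h1' : HasDerivAt F ((2 / Real.sqrt x ^ 2 *
        (Real.log (Real.sqrt x - s) + Real.log (Real.sqrt x + s) - 2 * Real.log s))
          * (1 / (2 * Real.sqrt x))) x :=
      (phiAux_hasDerivAt hs hu hune).comp x (Real.hasDerivAt_sqrt hx.ne')
    have hsu : s - Real.sqrt x ≠ 0 := sub_ne_zero.mpr (Ne.symm hune)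
    have hsu' : (0:ℝ) < s + Real.sqrt x := by positivity
    have e1 : Real.log |1 - x / r| =
        Real.log (Real.sqrt x - s) + Real.log (Real.sqrt x + s) - 2 * Real.log s := by
      have key : 1 - x / r = (s - Real.sqrt x) * (s + Real.sqrt x) / s ^ 2 := by
        have h9 : (s - Real.sqrt x) * (s + Real.sqrt x) = s ^ 2 - x := by
          nlinarith [hux]
        rw [h9, ← hsr]
        field_simp
      rw [Real.log_abs, key, Real.log_div (mul_ne_zero hsu hsu'.ne') (by positivity),
        Real.log_mul hsu hsu'.ne',
        show s - Real.sqrt x = -(Real.sqrt x - s) by ring, Real.log_neg_eq_log,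
        Real.log_pow]
      push_cast
      ring
    have e2 : x ^ (-(3 : ℝ) / 2) = 2 / Real.sqrt x ^ 2 * (1 / (2 * Real.sqrt x)) := by
      rw [show (-(3:ℝ) / 2) = -(3 / 2 : ℝ) by norm_num, Real.rpow_neg hx.le,
        show (3 / 2 : ℝ) = 1 + 1 / 2 by norm_num, Real.rpow_add hx, Real.rpow_one,
        ← Real.sqrt_eq_rpow, hux]
      rw [mul_inv]
      field_simp
    convert h1' using 1
    rw [hf]
    simp only
    rw [e1, e2]
    ring
  -- continuity of F
  have hcF : ContinuousOn F (Set.Icc (1 / κ) 1) := by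
    apply (phiAux_continuousOn s).comp Real.continuous_sqrt.continuousOn
    intro x hx
    exact ne_of_gt (Real.sqrt_pos.mpr (lt_of_lt_of_le ha hx.1))
  -- FTC on the two halves
  have hrmem : r ∈ Set.uIcc (1 / κ) 1 := by
    rw [Set.uIcc_of_le hab]; exact ⟨hr1, hr2⟩
  have i1 : IntervalIntegrable f MeasureTheory.volume (1 / κ) r :=
    hint.mono_set (Set.uIcc_subset_uIcc Set.left_mem_uIcc hrmem)
  have i2 : IntervalIntegrable f MeasureTheory.volume r 1 :=
    hint.mono_set (Set.uIcc_subset_uIcc hrmem Set.right_mem_uIcc)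
  have ftc1 : ∫ x in (1 / κ)..r, f x = F r - F (1 / κ) := by
    apply intervalIntegral.integral_eq_sub_of_hasDerivAt_of_le hr1
      (hcF.mono (Set.Icc_subset_Icc le_rfl hr2))
      (fun x hx => hD x (lt_of_lt_of_le ha hx.1.le) (ne_of_lt hx.2)) i1
  have ftc2 : ∫ x in r..1, f x = F 1 - F r := by
    apply intervalIntegral.integral_eq_sub_of_hasDerivAt_of_le hr2
      (hcF.mono (Set.Icc_subset_Icc hr1 le_rfl))
      (fun x hx => hD x (lt_trans hr0 hx.1) (ne_of_gt hx.1)) i2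
  have hsplit := intervalIntegral.integral_add_adjacent_intervals i1 i2
  rw [← hsplit, ftc1, ftc2]
  -- final inequality
  have hF1 : F 1 = phiAux s 1 := by rw [hF]; simp
  have hFt : F (1 / κ) = phiAux s t := rfl
  have c1 : -4 + 4 * Real.log s ≤ phiAux s 1 := by
    have hchi := aux_chi hs hs1
    unfold phiAux
    rw [inv_one]
    have h2s : (0:ℝ) < 2 / s := by positivity
    have hX : -(2 * s) ≤ (1 - s) * Real.log (1 - s) - (1 + s) * Real.log (1 + s) := by
      linarith
    have hmul := mul_le_mul_of_nonneg_left hX h2s.le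
    have e : 2 / s * (-(2 * s)) = -4 := by field_simp; ring
    nlinarith [hmul]
  have c2 : phiAux s t ≤ 0 := by
    have hp2 := aux_P2 ht hts
    unfold phiAux
    have e0 : (t - s) * Real.log (t - s) = -((s - t) * Real.log (s - t)) := by
      rw [show t - s = -(s - t) by ring, Real.log_neg_eq_log]; ring
    rw [e0, add_comm t s]
    have hpos : (0:ℝ) < 2 / s * t⁻¹ := by positivity
    have e : 2 / s * t⁻¹ * (-(2 * s * Real.log s)) + 4 * Real.log s * t⁻¹ = 0 := by
      field_simp
      ring
    nlinarith [mul_le_mul_of_nonneg_left (neg_le_neg hp2) hpos.le]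
  have hlog8 : Real.log (8 / r) = 3 * Real.log 2 - 2 * Real.log s := by
    rw [Real.log_div (by norm_num) hr0.ne', show (8:ℝ) = 2 ^ 3 by norm_num,
      Real.log_pow, ← hsr, Real.log_pow]
    push_cast
    ring
  have hl2 : (0.6931471803:ℝ) < Real.log 2 := Real.log_two_gt_d9
  rw [hF1, hFt, hlog8]
  linarith [c1, c2]
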